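/- The orbit of the pair (I₃, diag(1,−1,0)) of 3×3 complex matrices under GL₂(ℂ)×GL₃(ℂ)×GL₃(ℂ) is dense in the space of all pairs of 3×3 complex matrices (with its standard topology); i.e. the generic orbit O₁₇ of (E₆,α₄) is open dense of dimension 18. -/

import Mathlib

open Matrix

/-- The 3×3 complex matrix unit `E_{ij}`. -/
def Emat (i j : Fin 3) : Matrix (Fin 3) (Fin 3) ℂ := single i j 1

/-- Two pairs of 3×3 complex matrices are equivalent under `GL₂(ℂ) × GL₃(ℂ) × GL₃(ℂ)`,
acting by `((a b; c d), P, Q) · (A, B) = (P(aA+bB)Qᵀ, P(cA+dB)Qᵀ)`. -/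
def TEquiv (p q : Matrix (Fin 3) (Fin 3) ℂ × Matrix (Fin 3) (Fin 3) ℂ) : Prop :=
  ∃ (g : GL (Fin 2) ℂ) (P Q : GL (Fin 3) ℂ),
    q.1 = P.val * (g.val 0 0 • p.1 + g.val 0 1 • p.2) * Q.valᵀ ∧
    q.2 = P.val * (g.val 1 0 • p.1 + g.val 1 1 • p.2) * Q.valᵀ

open Polynomial

noncomputable section TensorOrbitAux

variable {R : Type*} [CommRing R] {S : Type*} [CommRing S]

/-- determinant of the 3×3 matrix with the given rows -/
def rdet3 (r0 r1 r2 : Fin 3 → R) : R := (Matrix.of ![r0, r1, r2]).det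

def co3 (A _B : Matrix (Fin 3) (Fin 3) R) : R := A.det
def co0 (_A B : Matrix (Fin 3) (Fin 3) R) : R := B.det
def co2 (A B : Matrix (Fin 3) (Fin 3) R) : R :=
  rdet3 (B 0) (A 1) (A 2) + rdet3 (A 0) (B 1) (A 2) + rdet3 (A 0) (A 1) (B 2)
def co1 (A B : Matrix (Fin 3) (Fin 3) R) : R := co2 B A

/-- discriminant of a binary cubic with coefficients c3 c2 c1 c0 -/
def disc4 (c3 c2 c1 c0 : R) : R :=
  c2^2*c1^2 - 4*c3*c1^3 - 4*c2^3*c0 - 27*c3^2*c0^2 + 18*c3*c2*c1*c0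

/-- discriminant of the binary cubic `det (x A + y B)` -/
def Dfun (A B : Matrix (Fin 3) (Fin 3) R) : R :=
  disc4 (co3 A B) (co2 A B) (co1 A B) (co0 A B)

lemma expand3 (A B : Matrix (Fin 3) (Fin 3) R) (x y : R) :
    Matrix.det (x • A + y • B)
      = x^3 * co3 A B + x^2*y * co2 A B + x*y^2 * co1 A B + y^3 * co0 A B := by
  simp [co3, co2, co1, co0, rdet3, Matrix.det_fin_three, Matrix.add_apply, Matrix.smul_apply]
  ring

lemma map_Dfun (φ : R →+* S) (A B : Matrix (Fin 3) (Fin 3) R) :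
    φ (Dfun A B) = Dfun (A.map φ) (B.map φ) := by
  have hr : ∀ r0 r1 r2 : Fin 3 → R,
      φ (rdet3 r0 r1 r2) = rdet3 (φ ∘ r0) (φ ∘ r1) (φ ∘ r2) := by
    intro r0 r1 r2
    simp [rdet3, Matrix.det_fin_three]
  have hm : ∀ (M : Matrix (Fin 3) (Fin 3) R) (i : Fin 3), (φ ∘ M i) = (M.map φ) i := by
    intro M i; funext j; simp [Matrix.map_apply]
  simp only [Dfun, disc4, co3, co2, co1, co0, map_add, map_sub, _root_.map_mul, map_pow,
    map_ofNat, hr, hm, RingHom.map_det, RingHom.mapMatrix_apply]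

lemma Dfun_transform (P Q A B : Matrix (Fin 3) (Fin 3) ℂ) (a b c d : ℂ) :
    Dfun (P*(a•A+b•B)*Qᵀ) (P*(c•A+d•B)*Qᵀ)
      = (a*d - b*c)^6 * (P.det*Q.det)^4 * Dfun A B := by
  set A' := P*(a•A+b•B)*Qᵀ with hA'
  set B' := P*(c•A+d•B)*Qᵀ with hB'
  set κ := P.det * Q.det with hκ
  have key : ∀ x y : ℂ,
      x^3 * co3 A' B' + x^2*y * co2 A' B' + x*y^2 * co1 A' B' + y^3 * co0 A' B'
      = κ * ((a*x+c*y)^3 * co3 A B + (a*x+c*y)^2*(b*x+d*y) * co2 A B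
          + (a*x+c*y)*(b*x+d*y)^2 * co1 A B + (b*x+d*y)^3 * co0 A B) := by
    intro x y
    rw [← expand3, ← expand3]
    have h1 : x • A' + y • B' = P * ((a*x+c*y) • A + (b*x+d*y) • B) * Qᵀ := by
      rw [hA', hB']
      simp only [Matrix.mul_add, Matrix.add_mul, Matrix.mul_smul, Matrix.smul_mul]
      module
    rw [h1, Matrix.det_mul, Matrix.det_mul, Matrix.det_transpose]
    ring
  have h3 : co3 A' B' = κ * (a^3 * co3 A B + a^2*b * co2 A B + a*b^2 * co1 A B + b^3 * co0 A B) := by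
    linear_combination key 1 0
  have h0 : co0 A' B' = κ * (c^3 * co3 A B + c^2*d * co2 A B + c*d^2 * co1 A B + d^3 * co0 A B) := by
    linear_combination key 0 1
  have h2 : co2 A' B' = κ * (((a+c)^3 * co3 A B + (a+c)^2*(b+d) * co2 A B
        + (a+c)*(b+d)^2 * co1 A B + (b+d)^3 * co0 A B
      - ((a-c)^3 * co3 A B + (a-c)^2*(b-d) * co2 A B
        + (a-c)*(b-d)^2 * co1 A B + (b-d)^3 * co0 A B))/2
      - (c^3 * co3 A B + c^2*d * co2 A B + c*d^2 * co1 A B + d^3 * co0 A B)) := by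
    linear_combination (key 1 1 - key 1 (-1))/2 - key 0 1
  have h1' : co1 A' B' = κ * (((a+c)^3 * co3 A B + (a+c)^2*(b+d) * co2 A B
        + (a+c)*(b+d)^2 * co1 A B + (b+d)^3 * co0 A B
      + ((a-c)^3 * co3 A B + (a-c)^2*(b-d) * co2 A B
        + (a-c)*(b-d)^2 * co1 A B + (b-d)^3 * co0 A B))/2
      - (a^3 * co3 A B + a^2*b * co2 A B + a*b^2 * co1 A B + b^3 * co0 A B)) := by
    linear_combination (key 1 1 + key 1 (-1))/2 - key 1 0
  show disc4 (co3 A' B') (co2 A' B') (co1 A' B') (co0 A' B') = _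
  rw [h3, h2, h1', h0]
  simp only [disc4, Dfun]
  ring

lemma Dfun_base : Dfun (1 : Matrix (Fin 3) (Fin 3) ℂ) (diagonal ![1,-1,0]) = 4 := by
  have hB : diagonal ![(1:ℂ),-1,0] = Matrix.of ![![1,0,0],![0,-1,0],![0,0,0]] := by
    ext i j
    fin_cases i <;> fin_cases j <;> simp [Matrix.diagonal_apply, Matrix.vecHead, Matrix.vecTail]
  have hI : (1 : Matrix (Fin 3) (Fin 3) ℂ) = Matrix.of ![![1,0,0],![0,1,0],![0,0,1]] := by
    ext i j
    fin_cases i <;> fin_cases j <;> simp [Matrix.one_apply, Matrix.vecHead, Matrix.vecTail]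
  rw [Dfun, hB, hI]
  norm_num [co3, co2, co1, co0, rdet3, Matrix.det_fin_three, disc4, Matrix.cons_val_two, Matrix.cons_val_one, Matrix.cons_val_zero, Matrix.head_cons, Matrix.tail_cons, Matrix.vecHead, Matrix.vecTail]


/-- `GL₃` element from a matrix with nonzero determinant. -/
def mkGL3 (A : Matrix (Fin 3) (Fin 3) ℂ) (h : A.det ≠ 0) : GL (Fin 3) ℂ :=
  Matrix.nonsingInvUnit A (isUnit_iff_ne_zero.mpr h)

@[simp] lemma mkGL3_val (A : Matrix (Fin 3) (Fin 3) ℂ) (h : A.det ≠ 0) :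
    (mkGL3 A h).val = A := rfl

/-- `GL₂` element from four entries with nonzero determinant. -/
def mkGL2 (a b c d : ℂ) (h : a*d - b*c ≠ 0) : GL (Fin 2) ℂ :=
  Matrix.nonsingInvUnit !![a,b;c,d] (by
    rw [Matrix.det_fin_two]
    simpa using h)

@[simp] lemma mkGL2_val (a b c d : ℂ) (h : a*d - b*c ≠ 0) :
    (mkGL2 a b c d h).val = !![a,b;c,d] := rfl

lemma act_comp (P Q : Matrix (Fin 3) (Fin 3) ℂ) (a b c d a' b' : ℂ)
    (A B : Matrix (Fin 3) (Fin 3) ℂ) :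
    a' • (P*(a•A+b•B)*Qᵀ) + b' • (P*(c•A+d•B)*Qᵀ)
      = P * ((a'*a+b'*c)•A + (a'*b+b'*d)•B) * Qᵀ := by
  simp only [Matrix.mul_add, Matrix.add_mul, Matrix.mul_smul, Matrix.smul_mul]
  module

lemma gl2_entry_mul (g h : GL (Fin 2) ℂ) (i j : Fin 2) :
    (g*h).val i j = g.val i 0 * h.val 0 j + g.val i 1 * h.val 1 j := by
  simp [Units.val_mul, Matrix.mul_apply, Fin.sum_univ_two]

lemma gl2_invmul (g : GL (Fin 2) ℂ) (i j : Fin 2) :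
    (g⁻¹).val i 0 * g.val 0 j + (g⁻¹).val i 1 * g.val 1 j = if i = j then 1 else 0 := by
  have h := gl2_entry_mul g⁻¹ g i j
  rw [inv_mul_cancel, Units.val_one] at h
  rw [← h, Matrix.one_apply]

lemma sandwich_cancel (P Q : GL (Fin 3) ℂ) (X : Matrix (Fin 3) (Fin 3) ℂ) :
    (P.val)⁻¹ * (P.val * X * Q.valᵀ) * ((Q.val)⁻¹)ᵀ = X := by
  have hPu : IsUnit P.val.det := (Matrix.isUnit_iff_isUnit_det _).mp P.isUnit
  have hQu : IsUnit Q.val.det := (Matrix.isUnit_iff_isUnit_det _).mp Q.isUnit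
  have hP : (P.val)⁻¹ * P.val = 1 := Matrix.nonsing_inv_mul _ hPu
  have hQ : Q.valᵀ * ((Q.val)⁻¹)ᵀ = 1 := by
    rw [← Matrix.transpose_mul, Matrix.nonsing_inv_mul _ hQu, Matrix.transpose_one]
  calc (P.val)⁻¹ * (P.val * X * Q.valᵀ) * ((Q.val)⁻¹)ᵀ
      = ((P.val)⁻¹ * P.val) * (X * (Q.valᵀ * ((Q.val)⁻¹)ᵀ)) := by
        simp only [Matrix.mul_assoc]
    _ = X := by rw [hP, hQ, Matrix.one_mul, Matrix.mul_one]

lemma tequiv_trans {p q r : Matrix (Fin 3) (Fin 3) ℂ × Matrix (Fin 3) (Fin 3) ℂ}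
    (h1 : TEquiv p q) (h2 : TEquiv q r) : TEquiv p r := by
  obtain ⟨g, P, Q, hq1, hq2⟩ := h1
  obtain ⟨g', P', Q', hr1, hr2⟩ := h2
  refine ⟨g'*g, P'*P, Q'*Q, ?_, ?_⟩
  · rw [hr1, hq1, hq2, act_comp]
    simp [gl2_entry_mul, Units.val_mul, Matrix.transpose_mul, Matrix.mul_assoc]
  · rw [hr2, hq1, hq2, act_comp]
    simp [gl2_entry_mul, Units.val_mul, Matrix.transpose_mul, Matrix.mul_assoc]

lemma tequiv_symm {p q : Matrix (Fin 3) (Fin 3) ℂ × Matrix (Fin 3) (Fin 3) ℂ}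
    (h : TEquiv p q) : TEquiv q p := by
  obtain ⟨g, P, Q, hq1, hq2⟩ := h
  refine ⟨g⁻¹, P⁻¹, Q⁻¹, ?_, ?_⟩
  · rw [hq1, hq2, act_comp, gl2_invmul, gl2_invmul]
    norm_num [sandwich_cancel P Q]
  · rw [hq1, hq2, act_comp, gl2_invmul, gl2_invmul]
    norm_num [sandwich_cancel P Q]


lemma smul_one_add_smul_diagonal (a b : ℂ) (μ : Fin 3 → ℂ) :
    a • (1 : Matrix (Fin 3) (Fin 3) ℂ) + b • diagonal μ = diagonal (fun i => a + b * μ i) := by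
  ext i j
  by_cases hij : i = j
  · subst hij
    simp
  · simp [Matrix.diagonal_apply_ne _ hij, Matrix.one_apply_ne hij]

lemma tequiv_diag_base (μ : Fin 3 → ℂ) (h01 : μ 0 ≠ μ 1) (h02 : μ 0 ≠ μ 2)
    (h12 : μ 1 ≠ μ 2) :
    TEquiv (1, diagonal μ) (1, diagonal ![1,-1,0]) := by
  set m0 := μ 0
  set m1 := μ 1
  set m2 := μ 2
  have d01 : m0 - m1 ≠ 0 := sub_ne_zero.mpr h01
  have d02 : m0 - m2 ≠ 0 := sub_ne_zero.mpr h02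
  have d12 : m1 - m2 ≠ 0 := sub_ne_zero.mpr h12
  set a := m0*m2 - 2*m0*m1 + m1*m2 with ha
  set b := m0 + m1 - 2*m2 with hb
  set c := -(m0-m1)*m2 with hc
  set d := m0 - m1 with hd
  have hab : ∀ i, a + b * μ i ≠ 0 := by
    intro i
    fin_cases i
    · show a + b * m0 ≠ 0
      rw [show a + b * m0 = (m0-m1)*(m0-m2) by rw [ha, hb]; ring]
      exact mul_ne_zero d01 d02
    · show a + b * m1 ≠ 0
      rw [show a + b * m1 = -((m0-m1)*(m1-m2)) by rw [ha, hb]; ring]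
      exact neg_ne_zero.mpr (mul_ne_zero d01 d12)
    · show a + b * m2 ≠ 0
      rw [show a + b * m2 = -(2*(m0-m2)*(m1-m2)) by rw [ha, hb]; ring]
      refine neg_ne_zero.mpr (mul_ne_zero (mul_ne_zero two_ne_zero d02) d12)
  have hdet : a*d - b*c ≠ 0 := by
    rw [show a*d - b*c = -(2*(m0-m1)*((m0-m2)*(m1-m2))) by rw [ha,hb,hc,hd]; ring]
    exact neg_ne_zero.mpr (mul_ne_zero (mul_ne_zero two_ne_zero d01) (mul_ne_zero d02 d12))
  have hPdet : (diagonal (fun i => (a + b * μ i)⁻¹)).det ≠ 0 := by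
    rw [Matrix.det_diagonal]
    exact Finset.prod_ne_zero_iff.mpr fun i _ => inv_ne_zero (hab i)
  refine ⟨mkGL2 a b c d hdet, mkGL3 _ hPdet, 1, ?_, ?_⟩
  · show (1 : Matrix (Fin 3) (Fin 3) ℂ) = _
    rw [mkGL3_val, mkGL2_val]
    have e1 : (!![a,b;c,d] : Matrix (Fin 2) (Fin 2) ℂ) 0 0 = a := rfl
    have e2 : (!![a,b;c,d] : Matrix (Fin 2) (Fin 2) ℂ) 0 1 = b := rfl
    rw [e1, e2, smul_one_add_smul_diagonal, Units.val_one, Matrix.transpose_one,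
      Matrix.mul_one, Matrix.diagonal_mul_diagonal]
    rw [show (fun i => (a + b * μ i)⁻¹ * (a + b * μ i)) = fun _ => (1:ℂ) by
      funext i; exact inv_mul_cancel₀ (hab i)]
    rw [Matrix.diagonal_one]
  · show diagonal ![1,-1,0] = _
    rw [mkGL3_val, mkGL2_val]
    have e1 : (!![a,b;c,d] : Matrix (Fin 2) (Fin 2) ℂ) 1 0 = c := rfl
    have e2 : (!![a,b;c,d] : Matrix (Fin 2) (Fin 2) ℂ) 1 1 = d := rfl
    rw [e1, e2, smul_one_add_smul_diagonal, Units.val_one, Matrix.transpose_one,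
      Matrix.mul_one, Matrix.diagonal_mul_diagonal]
    have hfun : (fun i => (a + b * μ i)⁻¹ * (c + d * μ i)) = ![1,-1,0] := by
      funext i
      fin_cases i
      · show (a + b * m0)⁻¹ * (c + d * m0) = (1:ℂ)
        rw [show c + d * m0 = a + b * m0 by rw [ha,hb,hc,hd]; ring,
          inv_mul_cancel₀ (hab 0)]
      · show (a + b * m1)⁻¹ * (c + d * m1) = (-1:ℂ)
        rw [show c + d * m1 = -(a + b * m1) by rw [ha,hb,hc,hd]; ring, mul_neg,
          inv_mul_cancel₀ (hab 1)]
      · show (a + b * m2)⁻¹ * (c + d * m2) = (0:ℂ)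
        rw [show c + d * m2 = 0 by rw [hc,hd]; ring, mul_zero]
    rw [hfun]

lemma Dfun_ne_of_tequiv {q : Matrix (Fin 3) (Fin 3) ℂ × Matrix (Fin 3) (Fin 3) ℂ}
    (h : TEquiv (1, diagonal ![1,-1,0]) q) : Dfun q.1 q.2 ≠ 0 := by
  obtain ⟨g, P, Q, h1, h2⟩ := h
  have hgd : g.val 0 0 * g.val 1 1 - g.val 0 1 * g.val 1 0 ≠ 0 := by
    have hu : IsUnit g.val.det := (Matrix.isUnit_iff_isUnit_det _).mp g.isUnit
    rw [Matrix.det_fin_two] at hu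
    exact hu.ne_zero
  have hP : P.val.det ≠ 0 :=
    ((Matrix.isUnit_iff_isUnit_det _).mp P.isUnit).ne_zero
  have hQ : Q.val.det ≠ 0 :=
    ((Matrix.isUnit_iff_isUnit_det _).mp Q.isUnit).ne_zero
  rw [h1, h2, Dfun_transform, Dfun_base]
  exact mul_ne_zero (mul_ne_zero (pow_ne_zero _ hgd)
    (pow_ne_zero _ (mul_ne_zero hP hQ))) (by norm_num)


lemma tequiv_of_detA {A B : Matrix (Fin 3) (Fin 3) ℂ} (hA : A.det ≠ 0)
    (hD : Dfun A B ≠ 0) :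
    ∃ μ : Fin 3 → ℂ, (μ 0 ≠ μ 1 ∧ μ 0 ≠ μ 2 ∧ μ 1 ≠ μ 2) ∧
      TEquiv (1, diagonal μ) (A, B) := by
  have hAu : IsUnit A.det := isUnit_iff_ne_zero.mpr hA
  set M := A⁻¹ * B with hMdef
  -- (1, M) has nonzero discriminant
  have e1 : A⁻¹ * ((1:ℂ) • A + (0:ℂ) • B) * (1 : Matrix (Fin 3) (Fin 3) ℂ)ᵀ = 1 := by
    simp [Matrix.nonsing_inv_mul _ hAu]
  have e2 : A⁻¹ * ((0:ℂ) • A + (1:ℂ) • B) * (1 : Matrix (Fin 3) (Fin 3) ℂ)ᵀ = M := by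
    simp [hMdef]
  have hd1M : Dfun (1 : Matrix (Fin 3) (Fin 3) ℂ) M ≠ 0 := by
    have h := Dfun_transform A⁻¹ 1 A B 1 0 0 1
    rw [e1, e2] at h
    rw [h]
    have hAi : (A⁻¹ : Matrix (Fin 3) (Fin 3) ℂ).det ≠ 0 := by
      rw [Matrix.det_nonsing_inv, Ring.inverse_eq_inv']
      exact inv_ne_zero hA
    refine mul_ne_zero (mul_ne_zero (by norm_num) (pow_ne_zero _ ?_)) hD
    simpa using hAi
  set c2 := co2 (1 : Matrix (Fin 3) (Fin 3) ℂ) M with hc2def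
  set c1 := co1 (1 : Matrix (Fin 3) (Fin 3) ℂ) M with hc1def
  set c0 := co0 (1 : Matrix (Fin 3) (Fin 3) ℂ) M with hc0def
  have hco3 : co3 (1 : Matrix (Fin 3) (Fin 3) ℂ) M = 1 := by simp [co3]
  have hdisc_ne : disc4 1 c2 c1 c0 ≠ 0 := by
    have : Dfun (1 : Matrix (Fin 3) (Fin 3) ℂ) M = disc4 1 c2 c1 c0 := by
      rw [Dfun, hco3]
    rwa [this] at hd1M
  -- roots of the characteristic cubic
  obtain ⟨r0, hr0⟩ : ∃ r0 : ℂ, r0^3 + c2*r0^2 + c1*r0 + c0 = 0 := by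
    have hdeg : (X^3 + C c2 * X^2 + C c1 * X + C c0 : ℂ[X]).degree = 3 := by
      compute_degree!
    obtain ⟨z, hz⟩ := Complex.exists_root (f := X^3 + C c2 * X^2 + C c1 * X + C c0)
      (by rw [hdeg]; norm_num)
    refine ⟨z, ?_⟩
    have := hz
    simpa [Polynomial.IsRoot] using this
  obtain ⟨so, hso⟩ : ∃ so : ℂ, so^2 = (c2 + r0)^2 - 4*(c1 + c2*r0 + r0^2) := by
    have hdeg : (X^2 - C ((c2 + r0)^2 - 4*(c1 + c2*r0 + r0^2)) : ℂ[X]).degree = 2 := by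
      compute_degree!
    obtain ⟨z, hz⟩ := Complex.exists_root
      (f := X^2 - C ((c2 + r0)^2 - 4*(c1 + c2*r0 + r0^2))) (by rw [hdeg]; norm_num)
    refine ⟨z, ?_⟩
    have := hz
    simp [Polynomial.IsRoot, sub_eq_zero] at this
    exact this
  set r1 := (-(c2 + r0) + so)/2 with hr1def
  set r2 := (-(c2 + r0) - so)/2 with hr2def
  have hfact : ∀ x : ℂ, x^3 + c2*x^2 + c1*x + c0 = (x - r0)*(x - r1)*(x - r2) := by
    intro x
    rw [hr1def, hr2def]
    linear_combination hr0 + ((x - r0)/4) * hso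
  have hdisc : disc4 1 c2 c1 c0 = ((r0-r1)*(r0-r2)*(r1-r2))^2 := by
    have f0 := hfact 0
    have f1 := hfact 1
    have f2 := hfact (-1)
    have hc0' : c0 = -(r0*r1*r2) := by linear_combination f0
    have hc2' : c2 = -(r0+r1+r2) := by linear_combination f1/2 + f2/2 - f0
    have hc1' : c1 = r0*r1+r0*r2+r1*r2 := by linear_combination f1/2 - f2/2
    rw [hc0', hc2', hc1']
    simp only [disc4]
    ring
  have hprod : (r0-r1)*(r0-r2)*(r1-r2) ≠ 0 := by
    intro h0
    rw [hdisc, h0] at hdisc_ne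
    simp at hdisc_ne
  have hne01 : r0 ≠ r1 := by
    intro h; exact hprod (by rw [h]; ring)
  have hne02 : r0 ≠ r2 := by
    intro h; exact hprod (by rw [h]; ring)
  have hne12 : r1 ≠ r2 := by
    intro h; exact hprod (by rw [h]; ring)
  set μ : Fin 3 → ℂ := ![-r0, -r1, -r2] with hμdef
  have hμ0 : μ 0 = -r0 := rfl
  have hμ1 : μ 1 = -r1 := rfl
  have hμ2 : μ 2 = -r2 := rfl
  have hμ01 : μ 0 ≠ μ 1 := by rw [hμ0, hμ1]; exact fun h => hne01 (neg_injective h)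
  have hμ02 : μ 0 ≠ μ 2 := by rw [hμ0, hμ2]; exact fun h => hne02 (neg_injective h)
  have hμ12 : μ 1 ≠ μ 2 := by rw [hμ1, hμ2]; exact fun h => hne12 (neg_injective h)
  -- roots are roots
  have hp : ∀ x ∈ ({r0, r1, r2} : Set ℂ), x^3 + c2*x^2 + c1*x + c0 = 0 := by
    intro x hx
    rw [hfact x]
    rcases hx with h | h | h <;> rw [h] <;> ring
  -- eigenvectors
  have heig : ∀ i : Fin 3, ∃ v : Fin 3 → ℂ, v ≠ 0 ∧ M *ᵥ v = μ i • v := by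
    intro i
    have hdet0 : (μ i • (1 : Matrix (Fin 3) (Fin 3) ℂ) - M).det = 0 := by
      have hsm : μ i • (1 : Matrix (Fin 3) (Fin 3) ℂ) - M
          = μ i • (1 : Matrix (Fin 3) (Fin 3) ℂ) + (-1 : ℂ) • M := by
        rw [neg_one_smul, ← sub_eq_add_neg]
      obtain ⟨x, hx, hmx⟩ : ∃ x ∈ ({r0, r1, r2} : Set ℂ), μ i = -x := by
        fin_cases i
        · exact ⟨r0, by simp, rfl⟩
        · exact ⟨r1, by simp, rfl⟩
        · exact ⟨r2, by simp, rfl⟩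
      rw [hsm, expand3, hco3, ← hc2def, ← hc1def, ← hc0def, hmx]
      linear_combination - hp x hx
    obtain ⟨v, hv, hvM⟩ := (Matrix.exists_mulVec_eq_zero_iff).mpr hdet0
    refine ⟨v, hv, ?_⟩
    rw [Matrix.sub_mulVec, sub_eq_zero, Matrix.smul_mulVec, Matrix.one_mulVec] at hvM
    exact hvM.symm
  choose v hv0 hveq using heig
  set Smat : Matrix (Fin 3) (Fin 3) ℂ := Matrix.of (fun i j => v j i) with hSdef
  have hMS : M * Smat = Smat * diagonal μ := by
    ext i j
    have hcf := congrFun (hveq j) i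
    calc (M * Smat) i j = (M *ᵥ v j) i := by
          simp [Matrix.mul_apply, Matrix.mulVec, dotProduct, hSdef]
      _ = μ j * v j i := by rw [hcf]; simp
      _ = (Smat * diagonal μ) i j := by
          rw [Matrix.mul_diagonal]
          simp [hSdef, mul_comm]
  have hSdet : Smat.det ≠ 0 := by
    intro hdet
    obtain ⟨w, hw, hws⟩ := (Matrix.exists_mulVec_eq_zero_iff).mpr hdet
    have hdiag : ∀ u : Fin 3 → ℂ, Smat *ᵥ u = 0 → Smat *ᵥ (fun j => μ j * u j) = 0 := by
      intro u hu
      have hdu : diagonal μ *ᵥ u = fun j => μ j * u j := by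
        funext x
        exact Matrix.mulVec_diagonal μ u x
      rw [← hdu, Matrix.mulVec_mulVec, ← hMS, ← Matrix.mulVec_mulVec, hu,
        Matrix.mulVec_zero]
    have h1 := hdiag w hws
    have h2 := hdiag _ h1
    have hx : ∀ (i j : Fin 3), w j * v j i = 0 := by
      intro i j
      have H0 : v 0 i * w 0 + v 1 i * w 1 + v 2 i * w 2 = 0 := by
        have h := congrFun hws i
        simpa [hSdef, Matrix.mulVec, dotProduct, Fin.sum_univ_three] using h
      have H1 : v 0 i * (μ 0 * w 0) + v 1 i * (μ 1 * w 1) + v 2 i * (μ 2 * w 2) = 0 := by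
        have h := congrFun h1 i
        simpa [hSdef, Matrix.mulVec, dotProduct, Fin.sum_univ_three] using h
      have H2 : v 0 i * (μ 0 * (μ 0 * w 0)) + v 1 i * (μ 1 * (μ 1 * w 1))
          + v 2 i * (μ 2 * (μ 2 * w 2)) = 0 := by
        have h := congrFun h2 i
        simpa [hSdef, Matrix.mulVec, dotProduct, Fin.sum_univ_three] using h
      have d01 : μ 0 - μ 1 ≠ 0 := sub_ne_zero.mpr hμ01
      have d02 : μ 0 - μ 2 ≠ 0 := sub_ne_zero.mpr hμ02
      have d12 : μ 1 - μ 2 ≠ 0 := sub_ne_zero.mpr hμ12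
      fin_cases j
      · have key : (w 0 * v 0 i) * ((μ 0 - μ 1) * (μ 0 - μ 2)) = 0 := by
          linear_combination H2 - (μ 1 + μ 2) * H1 + (μ 1 * μ 2) * H0
        exact (mul_eq_zero.mp key).resolve_right (mul_ne_zero d01 d02)
      · have key : (w 1 * v 1 i) * ((μ 1 - μ 0) * (μ 1 - μ 2)) = 0 := by
          linear_combination H2 - (μ 0 + μ 2) * H1 + (μ 0 * μ 2) * H0
        exact (mul_eq_zero.mp key).resolve_right
          (mul_ne_zero (fun h => d01 (by linear_combination -h)) d12)
      · have key : (w 2 * v 2 i) * ((μ 2 - μ 0) * (μ 2 - μ 1)) = 0 := by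
          linear_combination H2 - (μ 0 + μ 1) * H1 + (μ 0 * μ 1) * H0
        exact (mul_eq_zero.mp key).resolve_right
          (mul_ne_zero (fun h => d02 (by linear_combination -h))
            (fun h => d12 (by linear_combination -h)))
    obtain ⟨j0, hj0⟩ : ∃ j, w j ≠ 0 := by
      by_contra hcon
      push_neg at hcon
      exact hw (funext hcon)
    refine hv0 j0 (funext fun i => ?_)
    have := hx i j0
    rcases mul_eq_zero.mp this with h | h
    · exact absurd h hj0
    · exact h
  -- assemble the equivalence
  have hASdet : (A * Smat).det ≠ 0 := by
    rw [Matrix.det_mul]; exact mul_ne_zero hA hSdet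
  have hQdet : ((Smat⁻¹)ᵀ : Matrix (Fin 3) (Fin 3) ℂ).det ≠ 0 := by
    rw [Matrix.det_transpose, Matrix.det_nonsing_inv, Ring.inverse_eq_inv']
    exact inv_ne_zero hSdet
  have hSu : IsUnit Smat.det := isUnit_iff_ne_zero.mpr hSdet
  refine ⟨μ, ⟨hμ01, hμ02, hμ12⟩, 1, mkGL3 _ hASdet, mkGL3 _ hQdet, ?_, ?_⟩
  · show A = (A * Smat) * ((1 : GL (Fin 2) ℂ).val 0 0 • 1
      + (1 : GL (Fin 2) ℂ).val 0 1 • diagonal μ) * ((Smat⁻¹)ᵀ)ᵀ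
    rw [Units.val_one, Matrix.one_apply_eq, Matrix.one_apply_ne (by decide),
      Matrix.transpose_transpose, one_smul, zero_smul, add_zero, Matrix.mul_one,
      Matrix.mul_assoc, Matrix.mul_nonsing_inv _ hSu, Matrix.mul_one]
  · show B = (A * Smat) * ((1 : GL (Fin 2) ℂ).val 1 0 • 1
      + (1 : GL (Fin 2) ℂ).val 1 1 • diagonal μ) * ((Smat⁻¹)ᵀ)ᵀ
    rw [Units.val_one, Matrix.one_apply_eq, Matrix.one_apply_ne (by decide),
      Matrix.transpose_transpose, one_smul, zero_smul, zero_add]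
    calc B = A * M := by
          rw [hMdef, ← Matrix.mul_assoc, Matrix.mul_nonsing_inv _ hAu, Matrix.one_mul]
      _ = A * Smat * diagonal μ * Smat⁻¹ := by
          rw [Matrix.mul_assoc A Smat (diagonal μ), ← hMS, ← Matrix.mul_assoc A M Smat,
            Matrix.mul_assoc (A*M) Smat Smat⁻¹, Matrix.mul_nonsing_inv _ hSu,
            Matrix.mul_one]


lemma tequiv_main {A B : Matrix (Fin 3) (Fin 3) ℂ} (hD : Dfun A B ≠ 0) :
    TEquiv (1, diagonal ![1,-1,0]) (A, B) := by
  obtain ⟨g, hg⟩ : ∃ g : GL (Fin 2) ℂ, (g.val 0 0 • A + g.val 0 1 • B).det ≠ 0 := by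
    by_cases h3 : A.det ≠ 0
    · refine ⟨1, ?_⟩
      rw [Units.val_one, Matrix.one_apply_eq, Matrix.one_apply_ne (by decide)]
      simpa using h3
    by_cases h0 : B.det ≠ 0
    · refine ⟨mkGL2 0 1 1 0 (by norm_num), ?_⟩
      rw [mkGL2_val]
      have e : (!![(0:ℂ),1;1,0]) 0 0 • A + (!![(0:ℂ),1;1,0]) 0 1 • B = B := by
        have e1 : (!![(0:ℂ),1;1,0]) 0 0 = 0 := rfl
        have e2 : (!![(0:ℂ),1;1,0]) 0 1 = 1 := rfl
        rw [e1, e2, zero_smul, one_smul, zero_add]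
      rw [e]; exact h0
    by_cases h11 : (A + B).det ≠ 0
    · refine ⟨mkGL2 1 1 0 1 (by norm_num), ?_⟩
      rw [mkGL2_val]
      have e : (!![(1:ℂ),1;0,1]) 0 0 • A + (!![(1:ℂ),1;0,1]) 0 1 • B = A + B := by
        have e1 : (!![(1:ℂ),1;0,1]) 0 0 = 1 := rfl
        have e2 : (!![(1:ℂ),1;0,1]) 0 1 = 1 := rfl
        rw [e1, e2, one_smul, one_smul]
      rw [e]; exact h11
    · refine ⟨mkGL2 1 (-1) 0 1 (by norm_num), ?_⟩
      rw [mkGL2_val]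
      have e : (!![(1:ℂ),-1;0,1]) 0 0 • A + (!![(1:ℂ),-1;0,1]) 0 1 • B = A - B := by
        have e1 : (!![(1:ℂ),-1;0,1]) 0 0 = 1 := rfl
        have e2 : (!![(1:ℂ),-1;0,1]) 0 1 = -1 := rfl
        rw [e1, e2, one_smul, neg_one_smul, ← sub_eq_add_neg]
      rw [e]
      intro hc
      apply hD
      push_neg at h3 h0 h11
      have h3' : co3 A B = 0 := h3
      have h0' : co0 A B = 0 := h0
      have hAB1 : A + B = (1:ℂ) • A + (1:ℂ) • B := by rw [one_smul, one_smul]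
      have hAB2 : A - B = (1:ℂ) • A + (-1:ℂ) • B := by
        rw [one_smul, neg_one_smul, ← sub_eq_add_neg]
      rw [hAB1, expand3] at h11
      rw [hAB2, expand3] at hc
      have hco2 : co2 A B = 0 := by linear_combination h11/2 - hc/2 - h0'
      have hco1 : co1 A B = 0 := by linear_combination h11/2 + hc/2 - h3'
      rw [Dfun, h3', h0', hco2, hco1]
      simp [disc4]
  set A' := g.val 0 0 • A + g.val 0 1 • B with hA'def
  set B' := g.val 1 0 • A + g.val 1 1 • B with hB'def
  have h1 : TEquiv (A, B) (A', B') := by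
    refine ⟨g, 1, 1, ?_, ?_⟩ <;>
      rw [Units.val_one, Matrix.one_mul, Matrix.transpose_one, Matrix.mul_one]
  have hD' : Dfun A' B' ≠ 0 := by
    have h := Dfun_transform 1 1 A B (g.val 0 0) (g.val 0 1) (g.val 1 0) (g.val 1 1)
    simp only [Matrix.one_mul, Matrix.transpose_one, Matrix.mul_one] at h
    rw [← hA'def, ← hB'def] at h
    rw [h]
    have hgd : g.val 0 0 * g.val 1 1 - g.val 0 1 * g.val 1 0 ≠ 0 := by
      have hu : IsUnit g.val.det := (Matrix.isUnit_iff_isUnit_det _).mp g.isUnit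
      rw [Matrix.det_fin_two] at hu
      exact hu.ne_zero
    refine mul_ne_zero (mul_ne_zero (pow_ne_zero _ hgd) ?_) hD
    simp
  obtain ⟨μ, ⟨m01, m02, m12⟩, h2⟩ := tequiv_of_detA hg hD'
  have h3 := tequiv_diag_base μ m01 m02 m12
  exact tequiv_trans (tequiv_trans (tequiv_symm h3) h2) (tequiv_symm h1)

lemma orbit_eq :
    {q : Matrix (Fin 3) (Fin 3) ℂ × Matrix (Fin 3) (Fin 3) ℂ |
        TEquiv (1, diagonal ![1, -1, 0]) q}
      = {q : Matrix (Fin 3) (Fin 3) ℂ × Matrix (Fin 3) (Fin 3) ℂ | Dfun q.1 q.2 ≠ 0} := by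
  ext q
  constructor
  · exact Dfun_ne_of_tequiv
  · intro h
    exact tequiv_main h

lemma continuous_Dfun :
    Continuous (fun q : Matrix (Fin 3) (Fin 3) ℂ × Matrix (Fin 3) (Fin 3) ℂ =>
      Dfun q.1 q.2) := by
  have hr1 : ∀ i : Fin 3, Continuous fun q : Matrix (Fin 3) (Fin 3) ℂ ×
      Matrix (Fin 3) (Fin 3) ℂ => q.1 i := fun i => (continuous_apply i).comp continuous_fst
  have hr2 : ∀ i : Fin 3, Continuous fun q : Matrix (Fin 3) (Fin 3) ℂ ×
      Matrix (Fin 3) (Fin 3) ℂ => q.2 i := fun i => (continuous_apply i).comp continuous_snd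
  have hdet : ∀ (r s t : Matrix (Fin 3) (Fin 3) ℂ × Matrix (Fin 3) (Fin 3) ℂ →
      (Fin 3 → ℂ)), Continuous r → Continuous s → Continuous t →
      Continuous fun q => rdet3 (r q) (s q) (t q) := by
    intro r s t hr hs ht
    have : Continuous fun q : Matrix (Fin 3) (Fin 3) ℂ × Matrix (Fin 3) (Fin 3) ℂ =>
        Matrix.of ![r q, s q, t q] := by
      apply continuous_matrix
      intro i j
      fin_cases i
      · exact (continuous_apply j).comp hr
      · exact (continuous_apply j).comp hs
      · exact (continuous_apply j).comp ht
    exact this.matrix_det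
  have hco3 : Continuous fun q : Matrix (Fin 3) (Fin 3) ℂ × Matrix (Fin 3) (Fin 3) ℂ =>
      co3 q.1 q.2 := continuous_fst.matrix_det
  have hco0 : Continuous fun q : Matrix (Fin 3) (Fin 3) ℂ × Matrix (Fin 3) (Fin 3) ℂ =>
      co0 q.1 q.2 := continuous_snd.matrix_det
  have hco2 : Continuous fun q : Matrix (Fin 3) (Fin 3) ℂ × Matrix (Fin 3) (Fin 3) ℂ =>
      co2 q.1 q.2 :=
    ((hdet _ _ _ (hr2 0) (hr1 1) (hr1 2)).add (hdet _ _ _ (hr1 0) (hr2 1) (hr1 2))).add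
      (hdet _ _ _ (hr1 0) (hr1 1) (hr2 2))
  have hco1 : Continuous fun q : Matrix (Fin 3) (Fin 3) ℂ × Matrix (Fin 3) (Fin 3) ℂ =>
      co1 q.1 q.2 :=
    ((hdet _ _ _ (hr1 0) (hr2 1) (hr2 2)).add (hdet _ _ _ (hr2 0) (hr1 1) (hr2 2))).add
      (hdet _ _ _ (hr2 0) (hr2 1) (hr1 2))
  exact ((((hco2.pow 2).mul (hco1.pow 2)).sub
      ((continuous_const.mul hco3).mul (hco1.pow 3))).sub
      ((continuous_const.mul (hco2.pow 3)).mul hco0)).sub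
      ((continuous_const.mul (hco3.pow 2)).mul (hco0.pow 2)) |>.add
      ((((continuous_const.mul hco3).mul hco2).mul hco1).mul hco0)

lemma orbit_dense :
    Dense {q : Matrix (Fin 3) (Fin 3) ℂ × Matrix (Fin 3) (Fin 3) ℂ |
        TEquiv (1, diagonal ![1, -1, 0]) q} := by
  rw [orbit_eq]
  intro q
  set d1 : Matrix (Fin 3) (Fin 3) ℂ := 1 - q.1 with hd1def
  set d2 : Matrix (Fin 3) (Fin 3) ℂ := diagonal ![1,-1,0] - q.2 with hd2def
  set ψ : Polynomial ℂ :=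
    Dfun (q.1.map C + (X : ℂ[X]) • (d1.map C)) (q.2.map C + (X : ℂ[X]) • (d2.map C))
    with hψdef
  have heval : ∀ t : ℂ, Polynomial.eval t ψ = Dfun (q.1 + t • d1) (q.2 + t • d2) := by
    intro t
    have hmap : ∀ N N' : Matrix (Fin 3) (Fin 3) ℂ,
        (N.map C + (X : ℂ[X]) • (N'.map C)).map (Polynomial.evalRingHom t) = N + t • N' := by
      intro N N'
      ext i j
      simp only [Matrix.map_apply, Matrix.add_apply, Matrix.smul_apply, smul_eq_mul,
        Polynomial.coe_evalRingHom, Polynomial.eval_add, Polynomial.eval_mul,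
        Polynomial.eval_X, Polynomial.eval_C]
    calc Polynomial.eval t ψ = (Polynomial.evalRingHom t) ψ := rfl
      _ = Dfun _ _ := map_Dfun _ _ _
      _ = Dfun (q.1 + t • d1) (q.2 + t • d2) := by rw [hmap, hmap]
  have hψne : ψ ≠ 0 := by
    intro h0
    have h1 : Polynomial.eval 1 ψ = 4 := by
      rw [heval 1, hd1def, hd2def]
      simp only [one_smul, add_sub_cancel]
      exact Dfun_base
    rw [h0] at h1
    simp at h1
  have hfin : {t : ℂ | ψ.IsRoot t}.Finite := Polynomial.finite_setOf_isRoot hψne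
  have hev : ∀ᶠ t in nhdsWithin (0:ℂ) {0}ᶜ, Polynomial.eval t ψ ≠ 0 := by
    have hclosed : IsClosed ({t : ℂ | ψ.IsRoot t} \ {0}) :=
      (hfin.subset Set.diff_subset).isClosed
    have h0n : (0:ℂ) ∉ {t : ℂ | ψ.IsRoot t} \ {0} := fun h => h.2 rfl
    have hnb : ({t : ℂ | ψ.IsRoot t} \ {0})ᶜ ∈ nhds (0:ℂ) :=
      hclosed.isOpen_compl.mem_nhds h0n
    have h1 : ∀ᶠ t in nhdsWithin (0:ℂ) {0}ᶜ, t ∉ {t : ℂ | ψ.IsRoot t} \ {0} :=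
      nhdsWithin_le_nhds hnb
    have h2 : ∀ᶠ t in nhdsWithin (0:ℂ) {0}ᶜ, t ∈ ({0}ᶜ : Set ℂ) := self_mem_nhdsWithin
    filter_upwards [h1, h2] with t ht1 ht2
    intro hroot
    exact ht1 ⟨hroot, ht2⟩
  have htend : Filter.Tendsto (fun t : ℂ => (q.1 + t • d1, q.2 + t • d2))
      (nhdsWithin (0:ℂ) {0}ᶜ) (nhds q) := by
    have hcont : Continuous fun t : ℂ => (q.1 + t • d1, q.2 + t • d2) := by
      fun_prop
    have := hcont.tendsto 0
    simp only [zero_smul, add_zero, Prod.mk.eta] at this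
    exact this.mono_left nhdsWithin_le_nhds
  refine mem_closure_of_tendsto htend ?_
  filter_upwards [hev] with t ht
  show Dfun (q.1 + t • d1) (q.2 + t • d2) ≠ 0
  rw [← heval t]
  exact ht

end TensorOrbitAux

/-- The `GL₂(ℂ) × GL₃(ℂ) × GL₃(ℂ)`-orbit of the pair `(I₃, diag(1,−1,0))` is open and dense
in the space of all pairs of 3×3 complex matrices (with its standard topology): the generic
orbit `O₁₇` of `(E₆, α₄)` is open dense of dimension `18`. -/
theorem generic_tensor_pair_orbit_dense :
    Dense {q : Matrix (Fin 3) (Fin 3) ℂ × Matrix (Fin 3) (Fin 3) ℂ |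
        TEquiv (1, diagonal ![1, -1, 0]) q} ∧
    IsOpen {q : Matrix (Fin 3) (Fin 3) ℂ × Matrix (Fin 3) (Fin 3) ℂ |
        TEquiv (1, diagonal ![1, -1, 0]) q} ∧
    Module.finrank ℂ (Matrix (Fin 3) (Fin 3) ℂ × Matrix (Fin 3) (Fin 3) ℂ) = 18 := by
  refine ⟨orbit_dense, ?_, ?_⟩
  · rw [orbit_eq]
    have heq : {q : Matrix (Fin 3) (Fin 3) ℂ × Matrix (Fin 3) (Fin 3) ℂ | Dfun q.1 q.2 ≠ 0}
        = (fun q : Matrix (Fin 3) (Fin 3) ℂ × Matrix (Fin 3) (Fin 3) ℂ =>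
            Dfun q.1 q.2) ⁻¹' ({0}ᶜ) := rfl
    rw [heq]
    exact IsOpen.preimage continuous_Dfun isOpen_compl_singleton
  · rw [Module.finrank_prod, Module.finrank_matrix ℂ ℂ (Fin 3) (Fin 3)]
    simp [Module.finrank_self]
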